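/- If R is a commutative ring of Bass stable rank 1, then every matrix in Sp_{2n}(R) is connected to the identity through a path in Sp_{2n}(R) when R is additionally a Banach algebra; in particular, for R = O(X) the holomorphic functions on an open Riemann surface, every M ∈ Sp_{2n}(O(X)) is null-homotopic. -/

import Mathlib

open Matrix

/-- Index type for `2n × 2n` block matrices. -/
abbrev Idx (n : ℕ) := Fin n ⊕ Fin n

/-- The standard symplectic form matrix `J = [[0, I], [-I, 0]]`. -/
def Jmat (R : Type*) [CommRing R] (n : ℕ) : Matrix (Idx n) (Idx n) R :=
  Matrix.fromBlocks 0 1 (-1) 0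

/-- A `2n × 2n` matrix is symplectic if `Mᵀ J M = J`. -/
def IsSymplectic {R : Type*} [CommRing R] {n : ℕ} (M : Matrix (Idx n) (Idx n) R) : Prop :=
  Mᵀ * Jmat R n * M = Jmat R n

/-- The symmetric `n × n` matrix with `a` in entries `(i,j)` and `(j,i)` and zeros elsewhere. -/
def Smat {R : Type*} [CommRing R] {n : ℕ} (i j : Fin n) (a : R) : Matrix (Fin n) (Fin n) R :=
  Matrix.of fun k l => if (k = i ∧ l = j) ∨ (k = j ∧ l = i) then a else 0

/-- The elementary symplectic matrix `E_{ij}(a) = [[I, S],[0, I]]`. -/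
def Emat {R : Type*} [CommRing R] {n : ℕ} (i j : Fin n) (a : R) : Matrix (Idx n) (Idx n) R :=
  Matrix.fromBlocks 1 (Smat i j a) 0 1

/-- The elementary symplectic matrix `F_{ij}(a) = [[I, 0],[S, I]]`. -/
def Fmat {R : Type*} [CommRing R] {n : ℕ} (i j : Fin n) (a : R) : Matrix (Idx n) (Idx n) R :=
  Matrix.fromBlocks 1 0 (Smat i j a) 1

/-- The matrix `K_{ij}(a) = [[I + a e_{ij}, 0],[0, I - a e_{ji}]]` for `i ≠ j`. -/
def Kmat {R : Type*} [CommRing R] {n : ℕ} (i j : Fin n) (a : R) :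
    Matrix (Idx n) (Idx n) R :=
  Matrix.fromBlocks (1 + Matrix.single i j a) 0 0 (1 - Matrix.single j i a)

/-- An elementary symplectic matrix: `[[I,B],[0,I]]` or `[[I,0],[C,I]]` with symmetric block. -/
def IsElemSymp {R : Type*} [CommRing R] {n : ℕ} (M : Matrix (Idx n) (Idx n) R) : Prop :=
  ∃ B : Matrix (Fin n) (Fin n) R, Bᵀ = B ∧
    (M = Matrix.fromBlocks 1 B 0 1 ∨ M = Matrix.fromBlocks 1 0 B 1)


section Dev

variable {R : Type*} [NormedCommRing R] [NormedAlgebra ℂ R] {n : ℕ}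
set_option linter.unusedSectionVars false

/-- the scalar path -/
noncomputable def sc (t : ℝ) : R := algebraMap ℂ R (t : ℂ)

lemma sc_continuous : Continuous (sc (R := R)) :=
  (continuous_algebraMap ℂ R).comp Complex.continuous_ofReal

@[simp] lemma sc_zero : (sc 0 : R) = 0 := by simp [sc]
@[simp] lemma sc_one : (sc 1 : R) = 1 := by simp [sc]

/-- null-homotopic within the symplectic group, with globally continuous path -/
def SpNull (M : Matrix (Idx n) (Idx n) R) : Prop :=
  ∃ γ : ℝ → Matrix (Idx n) (Idx n) R,
    Continuous γ ∧ (∀ t, IsSymplectic (γ t)) ∧ γ 0 = 1 ∧ γ 1 = M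

lemma IsSymplectic.mul {M N : Matrix (Idx n) (Idx n) R} (hM : IsSymplectic M)
    (hN : IsSymplectic N) : IsSymplectic (M * N) := by
  unfold IsSymplectic at *
  rw [transpose_mul]
  calc Nᵀ * Mᵀ * Jmat R n * (M * N) = Nᵀ * (Mᵀ * Jmat R n * M) * N := by
        noncomm_ring
    _ = Jmat R n := by rw [hM, hN]

lemma IsSymplectic.one : IsSymplectic (1 : Matrix (Idx n) (Idx n) R) := by
  unfold IsSymplectic; simp

lemma SpNull.one : SpNull (1 : Matrix (Idx n) (Idx n) R) :=
  ⟨fun _ => 1, continuous_const, fun _ => IsSymplectic.one, rfl, rfl⟩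

lemma SpNull.mul {M N : Matrix (Idx n) (Idx n) R} (hM : SpNull M) (hN : SpNull N) :
    SpNull (M * N) := by
  obtain ⟨γ, hγc, hγs, hγ0, hγ1⟩ := hM
  obtain ⟨δ, hδc, hδs, hδ0, hδ1⟩ := hN
  exact ⟨fun t => γ t * δ t, hγc.matrix_mul hδc, fun t => (hγs t).mul (hδs t),
    by simp [hγ0, hδ0], by simp [hγ1, hδ1]⟩

lemma symp_E {B : Matrix (Fin n) (Fin n) R} (hB : Bᵀ = B) :
    IsSymplectic (fromBlocks 1 B 0 1 : Matrix (Idx n) (Idx n) R) := by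
  unfold IsSymplectic Jmat
  rw [fromBlocks_transpose]
  simp [fromBlocks_multiply, hB]

lemma symp_F {B : Matrix (Fin n) (Fin n) R} (hB : Bᵀ = B) :
    IsSymplectic (fromBlocks 1 0 B 1 : Matrix (Idx n) (Idx n) R) := by
  unfold IsSymplectic Jmat
  rw [fromBlocks_transpose]
  simp [fromBlocks_multiply, hB]

lemma symp_D {U V : Matrix (Fin n) (Fin n) R} (hUV : Uᵀ * V = 1) :
    IsSymplectic (fromBlocks U 0 0 V : Matrix (Idx n) (Idx n) R) := by
  have hVU : Vᵀ * U = 1 := by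
    have h1 : V * Uᵀ = 1 := mul_eq_one_comm.mp hUV
    have h2 : U * Vᵀ = 1 := by
      have := congrArg transpose h1
      simpa [transpose_mul] using this
    exact mul_eq_one_comm.mp h2
  unfold IsSymplectic Jmat
  rw [fromBlocks_transpose]
  simp [fromBlocks_multiply, hUV, hVU]

lemma SpNull_E {B : Matrix (Fin n) (Fin n) R} (hB : Bᵀ = B) :
    SpNull (fromBlocks 1 B 0 1 : Matrix (Idx n) (Idx n) R) := by
  refine ⟨fun t => fromBlocks 1 ((sc t : R) • B) 0 1, ?_, fun t => symp_E (by rw [transpose_smul, hB]),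
    by simp [fromBlocks_one], by simp [fromBlocks_one]⟩
  apply continuous_matrix
  rintro (i | i) (j | j) <;>
    simp only [fromBlocks_apply₁₁, fromBlocks_apply₁₂, fromBlocks_apply₂₁, fromBlocks_apply₂₂,
      Matrix.smul_apply, smul_eq_mul]
  · exact continuous_const
  · exact sc_continuous.mul continuous_const
  · exact continuous_const
  · exact continuous_const

lemma SpNull_F {B : Matrix (Fin n) (Fin n) R} (hB : Bᵀ = B) :
    SpNull (fromBlocks 1 0 B 1 : Matrix (Idx n) (Idx n) R) := by
  refine ⟨fun t => fromBlocks 1 0 ((sc t : R) • B) 1, ?_, fun t => symp_F (by rw [transpose_smul, hB]),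
    by simp [fromBlocks_one], by simp [fromBlocks_one]⟩
  apply continuous_matrix
  rintro (i | i) (j | j) <;>
    simp only [fromBlocks_apply₁₁, fromBlocks_apply₁₂, fromBlocks_apply₂₁, fromBlocks_apply₂₂,
      Matrix.smul_apply, smul_eq_mul]
  · exact continuous_const
  · exact continuous_const
  · exact sc_continuous.mul continuous_const
  · exact continuous_const

/-- paths of "GL-type" block diagonal matrices coming from unipotents -/
lemma SpNull_K {N : Matrix (Fin n) (Fin n) R} (hN : N * N = 0) :
    SpNull (fromBlocks (1 + N) 0 0 (1 - Nᵀ) : Matrix (Idx n) (Idx n) R) := by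
  refine ⟨fun t => fromBlocks (1 + (sc t : R) • N) 0 0 (1 - (sc t : R) • Nᵀ), ?_, fun t => symp_D ?_,
    by simp [fromBlocks_one], by simp [fromBlocks_one]⟩
  · apply continuous_matrix
    rintro (i | i) (j | j) <;>
      simp only [fromBlocks_apply₁₁, fromBlocks_apply₁₂, fromBlocks_apply₂₁, fromBlocks_apply₂₂,
        Matrix.add_apply, Matrix.sub_apply, Matrix.smul_apply, smul_eq_mul]
    · exact continuous_const.add (sc_continuous.mul continuous_const)
    · exact continuous_const
    · exact continuous_const
    · exact continuous_const.sub (sc_continuous.mul continuous_const)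
  · have : Nᵀ * Nᵀ = 0 := by
      rw [← transpose_mul, hN, transpose_zero]
    rw [transpose_add, transpose_one, transpose_smul]
    rw [mul_sub, add_mul, add_mul, mul_one, one_mul, mul_smul_comm, smul_mul_assoc, smul_mul_assoc,
      this, smul_zero, smul_zero, mul_one]
    abel

end Dev

section Util
variable {R : Type*} [CommRing R] {m : ℕ}
set_option linter.unusedSectionVars false

/-- matrix supported on row `i` -/
def rowMat (i : Fin m) (w : Fin m → R) : Matrix (Fin m) (Fin m) R :=
  of fun k l => if k = i then w l else 0

/-- matrix supported on column `j` -/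
def colMat (j : Fin m) (w : Fin m → R) : Matrix (Fin m) (Fin m) R :=
  of fun k l => if l = j then w k else 0

@[simp] lemma rowMat_apply (i : Fin m) (w : Fin m → R) (k l : Fin m) :
    rowMat i w k l = if k = i then w l else 0 := rfl

@[simp] lemma colMat_apply (j : Fin m) (w : Fin m → R) (k l : Fin m) :
    colMat j w k l = if l = j then w k else 0 := rfl

lemma rowMat_transpose (i : Fin m) (w : Fin m → R) : (rowMat i w)ᵀ = colMat i w := by
  ext k l; simp [transpose_apply]

lemma colMat_transpose (j : Fin m) (w : Fin m → R) : (colMat j w)ᵀ = rowMat j w := by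
  ext k l; simp [transpose_apply]

lemma rowMat_mul (i : Fin m) (w : Fin m → R) (A : Matrix (Fin m) (Fin m) R) (k l : Fin m) :
    (rowMat i w * A) k l = if k = i then ∑ x, w x * A x l else 0 := by
  rw [mul_apply]
  split_ifs with h
  · simp [h]
  · simp [h]

lemma mul_rowMat (i : Fin m) (w : Fin m → R) (A : Matrix (Fin m) (Fin m) R) (k l : Fin m) :
    (A * rowMat i w) k l = A k i * w l := by
  rw [mul_apply]
  simp [mul_ite]

lemma colMat_mul (j : Fin m) (w : Fin m → R) (A : Matrix (Fin m) (Fin m) R) (k l : Fin m) :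
    (colMat j w * A) k l = w k * A j l := by
  rw [mul_apply]
  simp [ite_mul]

lemma mul_colMat (j : Fin m) (w : Fin m → R) (A : Matrix (Fin m) (Fin m) R) (k l : Fin m) :
    (A * colMat j w) k l = if l = j then ∑ x, A k x * w x else 0 := by
  rw [mul_apply]
  split_ifs with h
  · simp [h]
  · simp [h]

lemma rowMat_nil (i : Fin m) (w : Fin m → R) (hw : w i = 0) :
    rowMat i w * rowMat i w = 0 := by
  ext k l
  rw [rowMat_mul]
  split_ifs with h
  · simp [hw, ite_mul]
  · simp

lemma colMat_nil (j : Fin m) (w : Fin m → R) (hw : w j = 0) :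
    colMat j w * colMat j w = 0 := by
  ext k l
  rw [colMat_mul]
  simp [hw]

lemma unip_mul_unip (N : Matrix (Fin m) (Fin m) R) (hN : N * N = 0) :
    (1 + N) * (1 - N) = 1 := by
  have h : (1 + N) * (1 - N) = 1 - N * N := by noncomm_ring
  rw [h, hN, sub_zero]

lemma unip_mul_unip' (N : Matrix (Fin m) (Fin m) R) (hN : N * N = 0) :
    (1 - N) * (1 + N) = 1 := by
  have h : (1 - N) * (1 + N) = 1 - N * N := by noncomm_ring
  rw [h, hN, sub_zero]

lemma isUnit_unip (N : Matrix (Fin m) (Fin m) R) (hN : N * N = 0) : IsUnit (1 + N) :=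
  ⟨⟨1 + N, 1 - N, unip_mul_unip N hN, unip_mul_unip' N hN⟩, rfl⟩

/-- zero-bordered embedding -/
def embZ (M : Matrix (Fin m) (Fin m) R) : Matrix (Fin (m + 1)) (Fin (m + 1)) R :=
  of fun k l => Fin.cases 0 (fun i => Fin.cases 0 (fun j => M i j) l) k

@[simp] lemma embZ_zero_left (M : Matrix (Fin m) (Fin m) R) (l : Fin (m + 1)) :
    embZ M 0 l = 0 := rfl

@[simp] lemma embZ_zero_right (M : Matrix (Fin m) (Fin m) R) (k : Fin (m + 1)) :
    embZ M k 0 = 0 := by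
  induction k using Fin.cases <;> rfl

@[simp] lemma embZ_succ_succ (M : Matrix (Fin m) (Fin m) R) (i j : Fin m) :
    embZ M i.succ j.succ = M i j := rfl

lemma embZ_mul (M N : Matrix (Fin m) (Fin m) R) : embZ M * embZ N = embZ (M * N) := by
  ext k l
  rw [mul_apply]
  induction k using Fin.cases with
  | zero => simp
  | succ i =>
    induction l using Fin.cases with
    | zero => simp
    | succ j => simp [Fin.sum_univ_succ, mul_apply]

lemma embZ_add (M N : Matrix (Fin m) (Fin m) R) : embZ M + embZ N = embZ (M + N) := by
  ext k l
  induction k using Fin.cases with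
  | zero => simp
  | succ i =>
    induction l using Fin.cases with
    | zero => simp
    | succ j => simp

/-- one-bordered embedding -/
def emb (M : Matrix (Fin m) (Fin m) R) : Matrix (Fin (m + 1)) (Fin (m + 1)) R :=
  1 + embZ (M - 1)

lemma emb_mul (M N : Matrix (Fin m) (Fin m) R) : emb M * emb N = emb (M * N) := by
  unfold emb
  calc (1 + embZ (M - 1)) * (1 + embZ (N - 1))
      = 1 + (embZ (M - 1) + (embZ (N - 1) + embZ (M - 1) * embZ (N - 1))) := by noncomm_ring
    _ = 1 + embZ (M * N - 1) := by
        rw [embZ_mul, embZ_add, embZ_add]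
        congr 1
        noncomm_ring

@[simp] lemma emb_zero_succ (M : Matrix (Fin m) (Fin m) R) (j : Fin m) :
    emb M 0 j.succ = 0 := by
  have : (0 : Fin (m+1)) ≠ j.succ := (Fin.succ_ne_zero j).symm
  simp [emb, one_apply, this]

@[simp] lemma emb_succ_zero (M : Matrix (Fin m) (Fin m) R) (i : Fin m) :
    emb M i.succ 0 = 0 := by
  simp [emb, one_apply, Fin.succ_ne_zero i]

@[simp] lemma emb_zero_zero (M : Matrix (Fin m) (Fin m) R) : emb M 0 0 = 1 := by
  simp [emb, one_apply]

@[simp] lemma emb_succ_succ (M : Matrix (Fin m) (Fin m) R) (i j : Fin m) :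
    emb M i.succ j.succ = M i j := by
  by_cases h : i = j
  · subst h; simp [emb, one_apply, Matrix.sub_apply]
  · have : i.succ ≠ j.succ := by simpa using h
    simp [emb, one_apply, Matrix.sub_apply, h, this]

lemma emb_unip (N : Matrix (Fin m) (Fin m) R) : emb (1 + N) = 1 + embZ N := by
  unfold emb
  rw [add_sub_cancel_left]

lemma emb_diagonal (d : Fin m → R) :
    emb (diagonal d) = diagonal (Fin.cases 1 d) := by
  ext k l
  induction k using Fin.cases with
  | zero =>
    induction l using Fin.cases with
    | zero => simp [diagonal_apply_eq]
    | succ j => simp [diagonal_apply_ne _ (Fin.succ_ne_zero j).symm]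
  | succ i =>
    induction l using Fin.cases with
    | zero => simp [diagonal_apply_ne _ (Fin.succ_ne_zero i)]
    | succ j =>
      by_cases h : i = j
      · subst h; simp [diagonal_apply_eq]
      · have : i.succ ≠ j.succ := by simpa using h
        simp [diagonal_apply_ne _ h, diagonal_apply_ne _ this]

end Util

/-- generators of GL over a stable-rank-one ring -/
inductive Gen {R : Type*} [CommRing R] {m : ℕ} : Matrix (Fin m) (Fin m) R → Prop
  | unip (N : Matrix (Fin m) (Fin m) R) : N * N = 0 → Gen (1 + N)
  | diag (d : Fin m → Rˣ) : Gen (diagonal fun i => (d i : R))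
  | mul {A B : Matrix (Fin m) (Fin m) R} : Gen A → Gen B → Gen (A * B)

section GenEmb
variable {R : Type*} [CommRing R] {m : ℕ}
set_option linter.unusedSectionVars false

@[simp] lemma embZ_zero : embZ (0 : Matrix (Fin m) (Fin m) R) = 0 := by
  ext k l
  induction k using Fin.cases with
  | zero => simp
  | succ i =>
    induction l using Fin.cases with
    | zero => simp
    | succ j => simp [embZ]

lemma Gen.emb_closed {A : Matrix (Fin m) (Fin m) R} (h : Gen A) : Gen (emb A) := by
  induction h with
  | unip N hN =>
    rw [emb_unip]
    exact Gen.unip _ (by rw [embZ_mul, hN, embZ_zero])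
  | diag d =>
    rw [emb_diagonal]
    have : (Fin.cases 1 (fun i => (d i : R)) : Fin (m+1) → R)
        = fun i => ((Fin.cases 1 d i : Rˣ) : R) := by
      funext k
      induction k using Fin.cases with
      | zero => simp
      | succ i => simp
    rw [this]
    exact Gen.diag _
  | mul _ _ ih1 ih2 =>
    rw [← emb_mul]
    exact Gen.mul ih1 ih2

end GenEmb

section GLDsec
variable {R : Type*} [NormedCommRing R] [NormedAlgebra ℂ R] {n : ℕ}
set_option linter.unusedSectionVars false

lemma six_identity (Δ Δ' : Matrix (Fin n) (Fin n) R) (h1 : Δ * Δ' = 1) (h2 : Δ' * Δ = 1) :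
    (fromBlocks 1 Δ 0 1 : Matrix (Idx n) (Idx n) R) * fromBlocks 1 0 (-Δ') 1 *
      fromBlocks 1 Δ 0 1 * fromBlocks 1 (-1) 0 1 * fromBlocks 1 0 1 1 *
      fromBlocks 1 (-1) 0 1 = fromBlocks Δ 0 0 Δ' := by
  simp only [fromBlocks_multiply, Matrix.mul_neg, Matrix.neg_mul, Matrix.mul_one,
    Matrix.one_mul, Matrix.mul_zero, Matrix.zero_mul, neg_one_smul, neg_neg, h1, h2,
    add_zero, zero_add, neg_add_cancel, add_neg_cancel]
  simp

/-- `A` together with its inverse-transpose gives a null-homotopic block diagonal -/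
def GLD (A : Matrix (Fin n) (Fin n) R) : Prop :=
  ∃ V, Aᵀ * V = 1 ∧ SpNull (fromBlocks A 0 0 V : Matrix (Idx n) (Idx n) R)

lemma GLD.mul {A B : Matrix (Fin n) (Fin n) R} (hA : GLD A) (hB : GLD B) : GLD (A * B) := by
  obtain ⟨VA, hVA, hSA⟩ := hA
  obtain ⟨VB, hVB, hSB⟩ := hB
  refine ⟨VA * VB, ?_, ?_⟩
  · rw [transpose_mul]
    calc Bᵀ * Aᵀ * (VA * VB) = Bᵀ * (Aᵀ * VA) * VB := by noncomm_ring
      _ = 1 := by rw [hVA, mul_one, hVB]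
  · have := hSA.mul hSB
    simpa [fromBlocks_multiply] using this

lemma GLD.unip {N : Matrix (Fin n) (Fin n) R} (hN : N * N = 0) : GLD (1 + N) := by
  refine ⟨1 - Nᵀ, ?_, SpNull_K hN⟩
  rw [transpose_add, transpose_one]
  have : Nᵀ * Nᵀ = 0 := by rw [← transpose_mul, hN, transpose_zero]
  have h : (1 + Nᵀ) * (1 - Nᵀ) = 1 - Nᵀ * Nᵀ := by noncomm_ring
  rw [h, this, sub_zero]

lemma GLD.diagU (d : Fin n → Rˣ) : GLD (diagonal fun i => (d i : R)) := by
  set Δ : Matrix (Fin n) (Fin n) R := diagonal fun i => (d i : R) with hΔdef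
  set Δ' : Matrix (Fin n) (Fin n) R := diagonal fun i => ((d i)⁻¹ : Rˣ) with hΔ'def
  have h1 : Δ * Δ' = 1 := by
    rw [hΔdef, hΔ'def, diagonal_mul_diagonal]
    simp
  have h2 : Δ' * Δ = 1 := by
    rw [hΔdef, hΔ'def, diagonal_mul_diagonal]
    simp
  refine ⟨Δ', ?_, ?_⟩
  · rw [hΔdef, diagonal_transpose, ← hΔdef, h1]
  · rw [← six_identity Δ Δ' h1 h2]
    have sΔ : Δᵀ = Δ := by rw [hΔdef, diagonal_transpose]
    have sΔ' : (-Δ')ᵀ = -Δ' := by rw [transpose_neg, hΔ'def, diagonal_transpose]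
    have s1 : ((-1 : Matrix (Fin n) (Fin n) R))ᵀ = -1 := by
      rw [transpose_neg, transpose_one]
    exact ((((((SpNull_E sΔ).mul (SpNull_F sΔ')).mul (SpNull_E sΔ)).mul
      (SpNull_E s1)).mul (SpNull_F (transpose_one))).mul (SpNull_E s1))

lemma Gen.gld {A : Matrix (Fin n) (Fin n) R} (h : Gen A) : GLD A := by
  induction h with
  | unip N hN => exact GLD.unip hN
  | diag d => exact GLD.diagU d
  | mul _ _ ih1 ih2 => exact ih1.mul ih2

end GLDsec

section GenDec
variable {R : Type*} [CommRing R]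
set_option linter.unusedSectionVars false

theorem gendec
    (hbsr : ∀ x₁ x₂ : R, (∃ r s : R, r * x₁ + s * x₂ = 1) → ∃ y : R, IsUnit (x₁ + y * x₂)) :
    ∀ {m : ℕ} (A : Matrix (Fin m) (Fin m) R), IsUnit A → Gen A := by
  intro m
  induction m with
  | zero =>
    intro A _
    have hA1 : A = diagonal fun i => ((1 : Rˣ) : R) := by
      ext i j; exact isEmptyElim i
    rw [hA1]; exact Gen.diag _
  | succ m ih =>
    intro A hA
    obtain ⟨u, hu⟩ := hA
    have hinvA : (↑u⁻¹ : Matrix (Fin (m+1)) (Fin (m+1)) R) * A = 1 := by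
      rw [← hu]; exact u.inv_mul
    set inv := (↑u⁻¹ : Matrix (Fin (m+1)) (Fin (m+1)) R) with hinvdef
    -- stable rank step
    have hone : inv 0 0 * A 0 0 + 1 * (∑ i : Fin m, inv 0 i.succ * A i.succ 0) = 1 := by
      have h1 : (inv * A) 0 0 = 1 := by rw [hinvA]; exact one_apply_eq 0
      rw [mul_apply] at h1
      rw [Fin.sum_univ_succ] at h1
      rw [one_mul]; exact h1
    obtain ⟨y, hy⟩ := hbsr (A 0 0) (∑ i : Fin m, inv 0 i.succ * A i.succ 0)
      ⟨inv 0 0, 1, hone⟩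
    set w : Fin (m+1) → R := Fin.cases 0 (fun i => y * inv 0 i.succ) with hwdef
    have hw0 : w 0 = 0 := Fin.cases_zero ..
    set A₁ := (1 + rowMat 0 w) * A with hA₁def
    have hA1apply : ∀ k l, A₁ k l = A k l + if k = 0 then ∑ x, w x * A x l else 0 := by
      intro k l
      rw [hA₁def, add_mul, one_mul, Matrix.add_apply, rowMat_mul]
    have hA100 : A₁ 0 0 = A 0 0 + y * ∑ i : Fin m, inv 0 i.succ * A i.succ 0 := by
      rw [hA1apply, if_pos rfl, Fin.sum_univ_succ, hw0, zero_mul, zero_add, Finset.mul_sum]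
      congr 1
      apply Finset.sum_congr rfl
      intro i _
      simp only [hwdef, Fin.cases_succ]
      rw [mul_assoc]
    have hA1unit : IsUnit (A₁ 0 0) := hA100 ▸ hy
    have hA1succ : ∀ (i : Fin m) (l : Fin (m+1)), A₁ i.succ l = A i.succ l := by
      intro i l
      rw [hA1apply, if_neg (Fin.succ_ne_zero i), add_zero]
    obtain ⟨u2, hu2⟩ := hA1unit
    set v := (↑u2⁻¹ : R) with hvdef
    have hvu : v * A₁ 0 0 = 1 := by rw [← hu2]; exact u2.inv_mul
    have huv : A₁ 0 0 * v = 1 := by rw [← hu2]; exact u2.mul_inv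
    set vv : Fin (m+1) → R := Fin.cases 0 (fun i => -(A₁ i.succ 0 * v)) with hvvdef
    have hvv0 : vv 0 = 0 := Fin.cases_zero ..
    set A₂ := (1 + colMat 0 vv) * A₁ with hA₂def
    have hA2apply : ∀ k l, A₂ k l = A₁ k l + vv k * A₁ 0 l := by
      intro k l
      rw [hA₂def, add_mul, one_mul, Matrix.add_apply, colMat_mul]
    have hA20l : ∀ l, A₂ 0 l = A₁ 0 l := by
      intro l; rw [hA2apply, hvv0, zero_mul, add_zero]
    have hA2s0 : ∀ i : Fin m, A₂ i.succ 0 = 0 := by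
      intro i
      rw [hA2apply]
      simp only [hvvdef, Fin.cases_succ]
      have : -(A₁ i.succ 0 * v) * A₁ 0 0 = -(A₁ i.succ 0 * (v * A₁ 0 0)) := by ring
      rw [this, hvu, mul_one, add_neg_cancel]
    set w' : Fin (m+1) → R := Fin.cases 0 (fun j => -(v * A₂ 0 j.succ)) with hw'def
    have hw'0 : w' 0 = 0 := Fin.cases_zero ..
    set A₃ := A₂ * (1 + rowMat 0 w') with hA₃def
    have hA3apply : ∀ k l, A₃ k l = A₂ k l + A₂ k 0 * w' l := by
      intro k l
      rw [hA₃def, mul_add, mul_one, Matrix.add_apply, mul_rowMat]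
    have hA300 : A₃ 0 0 = A₁ 0 0 := by
      rw [hA3apply, hw'0, mul_zero, add_zero, hA20l]
    have hA30s : ∀ j : Fin m, A₃ 0 j.succ = 0 := by
      intro j
      rw [hA3apply]
      simp only [hw'def, Fin.cases_succ, hA20l]
      have : A₁ 0 0 * -(v * A₁ 0 j.succ) = -((A₁ 0 0 * v) * A₁ 0 j.succ) := by ring
      rw [this, huv, one_mul, add_neg_cancel]
    have hA3s0 : ∀ i : Fin m, A₃ i.succ 0 = 0 := by
      intro i
      rw [hA3apply, hA2s0, hw'0, mul_zero, add_zero]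
    have hA3ss : ∀ i j : Fin m, A₃ i.succ j.succ = A₂ i.succ j.succ := by
      intro i j
      rw [hA3apply, hA2s0, zero_mul, add_zero]
    set minor := A₃.submatrix Fin.succ Fin.succ with hminordef
    have hA3eq : A₃ = diagonal (Fin.cases (A₁ 0 0) fun _ => (1:R)) * emb minor := by
      ext k l
      rw [diagonal_mul]
      induction k using Fin.cases with
      | zero =>
        induction l using Fin.cases with
        | zero => rw [hA300, emb_zero_zero, Fin.cases_zero, mul_one]
        | succ j => rw [hA30s, emb_zero_succ, mul_zero]
      | succ i =>
        induction l using Fin.cases with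
        | zero => rw [hA3s0, emb_succ_zero, mul_zero]
        | succ j => rw [emb_succ_succ, Fin.cases_succ, one_mul, hminordef, submatrix_apply]
    have hR1nil : rowMat 0 w * rowMat 0 w = 0 := rowMat_nil 0 w hw0
    have hC2nil : colMat 0 vv * colMat 0 vv = 0 := colMat_nil 0 vv hvv0
    have hR3nil : rowMat 0 w' * rowMat 0 w' = 0 := rowMat_nil 0 w' hw'0
    have hA3unit : IsUnit A₃ := by
      rw [hA₃def, hA₂def, hA₁def]
      exact ((isUnit_unip _ hC2nil).mul ((isUnit_unip _ hR1nil).mul ⟨u, hu⟩)).mul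
        (isUnit_unip _ hR3nil)
    have hdet3 : A₃.det = A₃ 0 0 * minor.det := by
      rw [det_succ_column_zero, Fin.sum_univ_succ]
      have hz : ∀ i : Fin m, (-1 : R) ^ (↑(i.succ) : ℕ) * A₃ i.succ 0 *
          ((A₃.submatrix i.succ.succAbove Fin.succ).det) = 0 := by
        intro i
        rw [hA3s0, mul_zero, zero_mul]
      rw [Finset.sum_congr rfl (fun i _ => hz i), Finset.sum_const, smul_zero, add_zero]
      rw [Fin.succAbove_zero]
      norm_num
      rfl
    have hminorunit : IsUnit minor := by
      rw [isUnit_iff_isUnit_det]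
      have := (isUnit_iff_isUnit_det A₃).mp hA3unit
      rw [hdet3] at this
      exact isUnit_of_mul_isUnit_right this
    have hgenminor : Gen minor := ih minor hminorunit
    have hgen3 : Gen A₃ := by
      rw [hA3eq]
      have hdiageq : (diagonal (Fin.cases (A₁ 0 0) fun _ => (1:R))
            : Matrix (Fin (m+1)) (Fin (m+1)) R)
          = diagonal (fun i : Fin (m+1) =>
              ((Fin.cases u2 (fun _ => (1 : Rˣ)) i : Rˣ) : R)) := by
        have hfun : (Fin.cases (A₁ 0 0) fun _ => (1:R))
            = (fun i : Fin (m+1) => ((Fin.cases u2 (fun _ => (1 : Rˣ)) i : Rˣ) : R)) := by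
          funext k
          induction k using Fin.cases with
          | zero => rw [Fin.cases_zero, Fin.cases_zero, hu2]
          | succ i => rw [Fin.cases_succ, Fin.cases_succ, Units.val_one]
        rw [hfun]
      rw [hdiageq]
      exact Gen.mul (Gen.diag _) hgenminor.emb_closed
    have hAeq : A = (1 - rowMat 0 w) * ((1 - colMat 0 vv) * (A₃ * (1 - rowMat 0 w'))) := by
      have e3 : A₃ * (1 - rowMat 0 w') = A₂ := by
        rw [hA₃def, mul_assoc, unip_mul_unip _ hR3nil, mul_one]
      have e2 : (1 - colMat 0 vv) * A₂ = A₁ := by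
        rw [hA₂def, ← mul_assoc, unip_mul_unip' _ hC2nil, one_mul]
      have e1 : (1 - rowMat 0 w) * A₁ = A := by
        rw [hA₁def, ← mul_assoc, unip_mul_unip' _ hR1nil, one_mul]
      rw [e3, e2, e1]
    rw [hAeq]
    have negnil : ∀ (N : Matrix (Fin (m+1)) (Fin (m+1)) R), N * N = 0 → (-N) * (-N) = 0 := by
      intro N hN; rw [neg_mul_neg, hN]
    have h1g : Gen (1 - rowMat 0 w) := by
      rw [sub_eq_add_neg]; exact Gen.unip _ (negnil _ hR1nil)
    have h2g : Gen (1 - colMat 0 vv) := by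
      rw [sub_eq_add_neg]; exact Gen.unip _ (negnil _ hC2nil)
    have h3g : Gen (1 - rowMat 0 w') := by
      rw [sub_eq_add_neg]; exact Gen.unip _ (negnil _ hR3nil)
    exact Gen.mul h1g (Gen.mul h2g (Gen.mul hgen3 h3g))
end GenDec

section LemA
variable {R : Type*} [CommRing R]
set_option linter.unusedSectionVars false

lemma embZ_transpose {m : ℕ} (M : Matrix (Fin m) (Fin m) R) : (embZ M)ᵀ = embZ Mᵀ := by
  ext k l
  rw [transpose_apply]
  induction k using Fin.cases with
  | zero =>
    induction l using Fin.cases with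
    | zero => rfl
    | succ j => rfl
  | succ i =>
    induction l using Fin.cases with
    | zero => rfl
    | succ j => rfl

lemma det_col_expand {m : ℕ} (M : Matrix (Fin (m+1)) (Fin (m+1)) R)
    (hs0 : ∀ i : Fin m, M i.succ 0 = 0) :
    M.det = M 0 0 * (M.submatrix Fin.succ Fin.succ).det := by
  rw [det_succ_column_zero, Fin.sum_univ_succ]
  have hz : ∀ i : Fin m, (-1 : R) ^ (↑(i.succ) : ℕ) * M i.succ 0 *
      ((M.submatrix i.succ.succAbove Fin.succ).det) = 0 := by
    intro i
    rw [hs0, mul_zero, zero_mul]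
  rw [Finset.sum_congr rfl (fun i _ => hz i), Finset.sum_const, smul_zero, add_zero,
    Fin.succAbove_zero]
  norm_num

lemma combY {m : ℕ} (A C Y₀ : Matrix (Fin m) (Fin m) R) (hY₀ : Y₀ᵀ = Y₀)
    (h : ∃ Y : Matrix (Fin m) (Fin m) R, Yᵀ = Y ∧ IsUnit (A + Y₀ * C + Y * C)) :
    ∃ Y : Matrix (Fin m) (Fin m) R, Yᵀ = Y ∧ IsUnit (A + Y * C) := by
  obtain ⟨Y, hYs, hYu⟩ := h
  refine ⟨Y₀ + Y, by rw [transpose_add, hY₀, hYs], ?_⟩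
  have h2 : A + (Y₀ + Y) * C = A + Y₀ * C + Y * C := by noncomm_ring
  rw [h2]; exact hYu

lemma combU {m : ℕ} (A C U Ui : Matrix (Fin m) (Fin m) R) (hUUi : U * Ui = 1)
    (h : ∃ Y : Matrix (Fin m) (Fin m) R, Yᵀ = Y ∧ IsUnit (U * A + Y * (Uiᵀ * C))) :
    ∃ Y : Matrix (Fin m) (Fin m) R, Yᵀ = Y ∧ IsUnit (A + Y * C) := by
  obtain ⟨Y, hYs, hYu⟩ := h
  have hUiU : Ui * U = 1 := mul_eq_one_comm.mp hUUi
  refine ⟨Ui * Y * Uiᵀ, ?_, ?_⟩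
  · rw [transpose_mul, transpose_mul, transpose_transpose, hYs, mul_assoc]
  · have key : A + (Ui * Y * Uiᵀ) * C = Ui * (U * A + Y * (Uiᵀ * C)) := by
      rw [mul_add]
      have h1 : Ui * (U * A) = A := by rw [← mul_assoc, hUiU, one_mul]
      have h2 : Ui * (Y * (Uiᵀ * C)) = Ui * Y * Uiᵀ * C := by
        simp only [mul_assoc]
      rw [h1, h2]
    rw [key]
    have hUiIsUnit : IsUnit Ui := ⟨⟨Ui, U, hUiU, hUUi⟩, rfl⟩
    exact hUiIsUnit.mul hYu

lemma symtrY {m : ℕ} {A C Y₀ : Matrix (Fin m) (Fin m) R} (hsym : Aᵀ * C = Cᵀ * A)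
    (hY₀ : Y₀ᵀ = Y₀) : (A + Y₀ * C)ᵀ * C = Cᵀ * (A + Y₀ * C) := by
  rw [transpose_add, transpose_mul, hY₀, add_mul, mul_add, hsym, mul_assoc]

lemma symtrU {m : ℕ} {A C U Ui : Matrix (Fin m) (Fin m) R} (hsym : Aᵀ * C = Cᵀ * A)
    (hUUi : U * Ui = 1) : (U * A)ᵀ * (Uiᵀ * C) = (Uiᵀ * C)ᵀ * (U * A) := by
  have hUiU : Ui * U = 1 := mul_eq_one_comm.mp hUUi
  have h1 : Uᵀ * Uiᵀ = 1 := by rw [← transpose_mul, hUiU, transpose_one]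
  have h2 : (U * A)ᵀ * (Uiᵀ * C) = Aᵀ * C := by
    rw [transpose_mul]
    calc Aᵀ * Uᵀ * (Uiᵀ * C) = Aᵀ * (Uᵀ * Uiᵀ) * C := by simp only [mul_assoc]
      _ = Aᵀ * C := by rw [h1, mul_one]
  have h3 : (Uiᵀ * C)ᵀ * (U * A) = Cᵀ * A := by
    rw [transpose_mul, transpose_transpose]
    calc Cᵀ * Ui * (U * A) = Cᵀ * (Ui * U) * A := by simp only [mul_assoc]
      _ = Cᵀ * A := by rw [hUiU, mul_one]
  rw [h2, h3, hsym]

lemma unimtrY {m : ℕ} {A C P Q Y₀ : Matrix (Fin m) (Fin m) R} (h : P * A + Q * C = 1) :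
    P * (A + Y₀ * C) + (Q - P * Y₀) * C = 1 := by
  rw [← h]; noncomm_ring

lemma unimtrU {m : ℕ} {A C P Q U Ui : Matrix (Fin m) (Fin m) R} (h : P * A + Q * C = 1)
    (hUUi : U * Ui = 1) : (P * Ui) * (U * A) + (Q * Uᵀ) * (Uiᵀ * C) = 1 := by
  have hUiU : Ui * U = 1 := mul_eq_one_comm.mp hUUi
  have h1 : Uᵀ * Uiᵀ = 1 := by rw [← transpose_mul, hUiU, transpose_one]
  calc (P * Ui) * (U * A) + (Q * Uᵀ) * (Uiᵀ * C)
      = P * (Ui * U) * A + Q * (Uᵀ * Uiᵀ) * C := by simp only [mul_assoc]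
    _ = P * A + Q * C := by rw [hUiU, h1, mul_one, mul_one]
    _ = 1 := h

end LemA

section LemA2
variable {R : Type*} [CommRing R]
set_option linter.unusedSectionVars false

lemma finalStage {m : ℕ}
    (IH : ∀ A C : Matrix (Fin m) (Fin m) R, Aᵀ * C = Cᵀ * A →
      (∃ P Q : Matrix (Fin m) (Fin m) R, P * A + Q * C = 1) →
      ∃ Y : Matrix (Fin m) (Fin m) R, Yᵀ = Y ∧ IsUnit (A + Y * C))
    (A C P Q : Matrix (Fin (m+1)) (Fin (m+1)) R)
    (hsym : Aᵀ * C = Cᵀ * A) (hPQ : P * A + Q * C = 1)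
    (h00 : A 0 0 = 1) (hs0 : ∀ i : Fin m, A i.succ 0 = 0) :
    ∃ Y : Matrix (Fin (m+1)) (Fin (m+1)) R, Yᵀ = Y ∧ IsUnit (A + Y * C) := by
  classical
  set Z : Matrix (Fin (m+1)) (Fin (m+1)) R :=
    of (fun k l => if l = 0 then -(C k 0) else if k = 0 then -(C l 0) else 0) with hZdef
  have hZapply : ∀ k l, Z k l = if l = 0 then -(C k 0) else if k = 0 then -(C l 0) else 0 :=
    fun k l => rfl
  have hZs : Zᵀ = Z := by
    ext k l
    rw [transpose_apply, hZapply, hZapply]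
    by_cases hk : k = 0 <;> by_cases hl : l = 0 <;> simp [hk, hl]
  set C4 := C + Z * A with hC4def
  have hC4col : ∀ k, C4 k 0 = 0 := by
    intro k
    have hZA : (Z * A) k 0 = -(C k 0) := by
      rw [mul_apply, Fin.sum_univ_succ]
      have hz : ∀ i : Fin m, Z k i.succ * A i.succ 0 = 0 := by
        intro i; rw [hs0, mul_zero]
      rw [Finset.sum_congr rfl (fun i _ => hz i), Finset.sum_const, smul_zero, add_zero,
        h00, mul_one, hZapply, if_pos rfl]
    rw [hC4def, Matrix.add_apply, hZA, add_neg_cancel]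
  have hsym4 : Aᵀ * C4 = C4ᵀ * A := by
    rw [hC4def, transpose_add, transpose_mul, hZs]
    have e1 : Aᵀ * (C + Z * A) = Aᵀ * C + Aᵀ * Z * A := by noncomm_ring
    have e2 : (Cᵀ + Aᵀ * Z) * A = Cᵀ * A + Aᵀ * Z * A := by noncomm_ring
    rw [e1, e2, hsym]
  have hC4row : ∀ l, C4 0 l = 0 := by
    intro l
    have h1 : (Aᵀ * C4) 0 l = C4 0 l := by
      rw [mul_apply, Fin.sum_univ_succ]
      have hz : ∀ i : Fin m, Aᵀ 0 i.succ * C4 i.succ l = 0 := by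
        intro i; rw [transpose_apply, hs0, zero_mul]
      rw [Finset.sum_congr rfl (fun i _ => hz i), Finset.sum_const, smul_zero, add_zero,
        transpose_apply, h00, one_mul]
    have h2 : (C4ᵀ * A) 0 l = 0 := by
      rw [mul_apply]
      have hz : ∀ k, C4ᵀ 0 k * A k l = 0 := by
        intro k; rw [transpose_apply, hC4col, zero_mul]
      rw [Finset.sum_congr rfl (fun k _ => hz k), Finset.sum_const, smul_zero]
    rw [← h1, hsym4, h2]
  set P4 := P - Q * Z with hP4def
  have hPQ4 : P4 * A + Q * C4 = 1 := by
    rw [hP4def, hC4def, ← hPQ]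
    noncomm_ring
  have hP4s0 : ∀ i : Fin m, P4 i.succ 0 = 0 := by
    intro i
    have h1 : (P4 * A + Q * C4) i.succ 0 = 0 := by
      rw [hPQ4, one_apply_ne (Fin.succ_ne_zero i)]
    rw [Matrix.add_apply, mul_apply, mul_apply] at h1
    have h2 : ∀ k, Q i.succ k * C4 k 0 = 0 := by
      intro k; rw [hC4col, mul_zero]
    rw [Finset.sum_congr rfl (fun k _ => h2 k), Finset.sum_const, smul_zero, add_zero] at h1
    rw [Fin.sum_univ_succ] at h1
    have h3 : ∀ j : Fin m, P4 i.succ j.succ * A j.succ 0 = 0 := by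
      intro j; rw [hs0, mul_zero]
    rw [Finset.sum_congr rfl (fun j _ => h3 j), Finset.sum_const, smul_zero, add_zero,
      h00, mul_one] at h1
    exact h1
  set Am := A.submatrix Fin.succ Fin.succ with hAmdef
  set Cm := C4.submatrix Fin.succ Fin.succ with hCmdef
  have hsymm : Amᵀ * Cm = Cmᵀ * Am := by
    ext i j
    have e1 : (Amᵀ * Cm) i j = (Aᵀ * C4) i.succ j.succ := by
      rw [mul_apply, mul_apply, Fin.sum_univ_succ, transpose_apply, hC4row, mul_zero, zero_add]
      apply Finset.sum_congr rfl
      intro k _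
      rw [transpose_apply, transpose_apply, hAmdef, hCmdef, submatrix_apply, submatrix_apply]
    have e2 : (Cmᵀ * Am) i j = (C4ᵀ * A) i.succ j.succ := by
      rw [mul_apply, mul_apply, Fin.sum_univ_succ, transpose_apply, hC4row, zero_mul, zero_add]
      apply Finset.sum_congr rfl
      intro k _
      rw [transpose_apply, transpose_apply, hAmdef, hCmdef, submatrix_apply, submatrix_apply]
    rw [e1, e2, hsym4]
  have hPQm : P4.submatrix Fin.succ Fin.succ * Am + Q.submatrix Fin.succ Fin.succ * Cm = 1 := by
    ext i j
    have e1 : (P4.submatrix Fin.succ Fin.succ * Am) i j = (P4 * A) i.succ j.succ := by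
      rw [mul_apply, mul_apply, Fin.sum_univ_succ, hP4s0 i, zero_mul, zero_add]
      apply Finset.sum_congr rfl
      intro k _
      rw [hAmdef, submatrix_apply, submatrix_apply]
    have e2 : (Q.submatrix Fin.succ Fin.succ * Cm) i j = (Q * C4) i.succ j.succ := by
      rw [mul_apply, mul_apply, Fin.sum_univ_succ, hC4row, mul_zero, zero_add]
      apply Finset.sum_congr rfl
      intro k _
      rw [hCmdef, submatrix_apply, submatrix_apply]
    rw [Matrix.add_apply, e1, e2, ← Matrix.add_apply, hPQ4]
    simp [one_apply, Fin.succ_inj]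
  obtain ⟨Y1, hY1s, hY1u⟩ := IH Am Cm hsymm ⟨_, _, hPQm⟩
  -- lift the witness
  have hYlifts : (embZ Y1)ᵀ = embZ Y1 := by rw [embZ_transpose, hY1s]
  set M' := A + embZ Y1 * C4 with hM'def
  have hrow0 : ∀ l, (embZ Y1 * C4) 0 l = 0 := by
    intro l
    rw [mul_apply]
    have hz : ∀ k, embZ Y1 0 k * C4 k l = 0 := by
      intro k; rw [embZ_zero_left, zero_mul]
    rw [Finset.sum_congr rfl (fun k _ => hz k), Finset.sum_const, smul_zero]
  have hcol0 : ∀ k, (embZ Y1 * C4) k 0 = 0 := by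
    intro k
    rw [mul_apply]
    have hz : ∀ x, embZ Y1 k x * C4 x 0 = 0 := by
      intro x; rw [hC4col, mul_zero]
    rw [Finset.sum_congr rfl (fun x _ => hz x), Finset.sum_const, smul_zero]
  have hM'00 : M' 0 0 = 1 := by rw [hM'def, Matrix.add_apply, hcol0, add_zero, h00]
  have hM's0 : ∀ i : Fin m, M' i.succ 0 = 0 := by
    intro i; rw [hM'def, Matrix.add_apply, hcol0, add_zero, hs0]
  have hM'0l : ∀ l, M' 0 l = A 0 l := by
    intro l; rw [hM'def, Matrix.add_apply, hrow0, add_zero]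
  have hM'min : M'.submatrix Fin.succ Fin.succ = Am + Y1 * Cm := by
    ext i j
    have h2 : (embZ Y1 * C4) i.succ j.succ = (Y1 * Cm) i j := by
      rw [mul_apply, mul_apply, Fin.sum_univ_succ, embZ_zero_right, zero_mul, zero_add]
      apply Finset.sum_congr rfl
      intro k _
      rw [embZ_succ_succ, hCmdef, submatrix_apply]
    rw [submatrix_apply, hM'def, Matrix.add_apply, h2, Matrix.add_apply]
    rfl
  have hM'unit : IsUnit M' := by
    rw [isUnit_iff_isUnit_det, det_col_expand M' hM's0, hM'00, one_mul, hM'min]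
    exact (isUnit_iff_isUnit_det _).mp hY1u
  -- pull back through the C-move
  set q : Fin (m+1) → R := fun k => ∑ l, embZ Y1 k l * C l 0 with hqdef
  have hq0 : q 0 = 0 := by
    rw [hqdef]
    have hz : ∀ l, embZ Y1 0 l * C l 0 = 0 := by
      intro l; rw [embZ_zero_left, zero_mul]
    simp only []
    rw [Finset.sum_congr rfl (fun l _ => hz l), Finset.sum_const, smul_zero]
  have hYZ : embZ Y1 * Z = colMat 0 (fun k => -(q k)) := by
    ext k l
    rw [mul_apply, colMat_apply]
    by_cases hl : l = 0
    · subst hl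
      have hz : ∀ x, embZ Y1 k x * Z x 0 = -(embZ Y1 k x * C x 0) := by
        intro x; rw [hZapply, if_pos rfl, mul_neg]
      rw [Finset.sum_congr rfl (fun x _ => hz x), ← Finset.sum_neg_distrib]
      simp [hqdef]
    · have hz : ∀ x, embZ Y1 k x * Z x l =
          if x = 0 then embZ Y1 k x * (-(C l 0)) else 0 := by
        intro x
        rw [hZapply, if_neg hl]
        by_cases hx : x = 0
        · rw [if_pos hx, if_pos hx]
        · rw [if_neg hx, if_neg hx, mul_zero]
      rw [Finset.sum_congr rfl (fun x _ => hz x), Finset.sum_ite_eq' Finset.univ 0]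
      simp [hl]
  have hfact : A + embZ Y1 * C = (1 + colMat 0 q) * M' := by
    have hC4C : embZ Y1 * C4 = embZ Y1 * C + colMat 0 (fun k => -(q k)) * A := by
      rw [hC4def, mul_add, ← mul_assoc, hYZ]
    ext k l
    have hrhs : ((1 + colMat 0 q) * M') k l = M' k l + q k * M' 0 l := by
      rw [add_mul, one_mul, Matrix.add_apply, colMat_mul]
    rw [Matrix.add_apply, hrhs, hM'0l]
    have hM'kl : M' k l = A k l + ((embZ Y1 * C) k l + (-(q k)) * A 0 l) := by
      rw [hM'def, Matrix.add_apply, hC4C, Matrix.add_apply, colMat_mul]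
    rw [hM'kl]
    ring
  have hWu : IsUnit (1 + colMat 0 q) := isUnit_unip _ (colMat_nil 0 q hq0)
  exact ⟨embZ Y1, hYlifts, by rw [hfact]; exact hWu.mul hM'unit⟩

end LemA2

section LemA3
variable {R : Type*} [CommRing R]
set_option linter.unusedSectionVars false

theorem lemA
    (hbsr : ∀ x₁ x₂ : R, (∃ r s : R, r * x₁ + s * x₂ = 1) → ∃ y : R, IsUnit (x₁ + y * x₂)) :
    ∀ {m : ℕ} (A C : Matrix (Fin m) (Fin m) R), Aᵀ * C = Cᵀ * A →
      (∃ P Q : Matrix (Fin m) (Fin m) R, P * A + Q * C = 1) →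
      ∃ Y : Matrix (Fin m) (Fin m) R, Yᵀ = Y ∧ IsUnit (A + Y * C) := by
  intro m
  induction m with
  | zero =>
    intro A C _ _
    refine ⟨0, transpose_zero, ?_⟩
    have hA1 : A + 0 * C = 1 := by ext i j; exact isEmptyElim i
    rw [hA1]; exact isUnit_one
  | succ m ih =>
    intro A C hsym hPQex
    classical
    obtain ⟨P, Q, hPQ⟩ := hPQex
    have h00 : (∑ k, P 0 k * A k 0) + (∑ k, Q 0 k * C k 0) = 1 := by
      have h := congrArg (fun M : Matrix (Fin (m+1)) (Fin (m+1)) R => M 0 0) hPQ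
      simpa [Matrix.add_apply, mul_apply] using h
    have hpair : P 0 0 * A 0 0 +
        1 * ((∑ i : Fin m, P 0 i.succ * A i.succ 0) + ∑ k, Q 0 k * C k 0) = 1 := by
      rw [one_mul, ← add_assoc, ← Fin.sum_univ_succ (f := fun k => P 0 k * A k 0)]
      exact h00
    obtain ⟨y, hy⟩ := hbsr (A 0 0)
      ((∑ i : Fin m, P 0 i.succ * A i.succ 0) + ∑ k, Q 0 k * C k 0) ⟨P 0 0, 1, hpair⟩
    set lam : Fin m → R := fun i => y * P 0 i.succ with hlamdef
    set mt : Fin (m+1) → R := fun k => y * Q 0 k with hmtdef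
    set T : R := ∑ i : Fin m, lam i * mt i.succ with hTdef
    set mu : Fin (m+1) → R := Fin.cases (mt 0 - T) (fun i => mt i.succ) with hmudef
    set Yμ : Matrix (Fin (m+1)) (Fin (m+1)) R :=
      of (fun k l => if k = 0 then mu l else if l = 0 then mu k else 0) with hYμdef
    have hYμapply : ∀ k l, Yμ k l = if k = 0 then mu l else if l = 0 then mu k else 0 :=
      fun k l => rfl
    have hYμs : Yμᵀ = Yμ := by
      ext k l
      rw [transpose_apply, hYμapply, hYμapply]
      by_cases hk : k = 0 <;> by_cases hl : l = 0 <;> simp [hk, hl]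
    set lamext : Fin (m+1) → R := Fin.cases 0 lam with hlamextdef
    have hlamext0 : lamext 0 = 0 := by simp [hlamextdef]
    set U₁ : Matrix (Fin (m+1)) (Fin (m+1)) R := 1 + rowMat 0 lamext with hU₁def
    set Ui₁ : Matrix (Fin (m+1)) (Fin (m+1)) R := 1 - rowMat 0 lamext with hUi₁def
    have hU₁i : U₁ * Ui₁ = 1 := unip_mul_unip _ (rowMat_nil 0 lamext hlamext0)
    apply combY A C Yμ hYμs
    apply combU (A + Yμ * C) C U₁ Ui₁ hU₁i
    set B : Matrix (Fin (m+1)) (Fin (m+1)) R := A + Yμ * C with hBdef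
    set A1 : Matrix (Fin (m+1)) (Fin (m+1)) R := U₁ * B with hA1def
    set C1 : Matrix (Fin (m+1)) (Fin (m+1)) R := Ui₁ᵀ * C with hC1def
    have hsymB : Bᵀ * C = Cᵀ * B := symtrY hsym hYμs
    have hsym1 : A1ᵀ * C1 = C1ᵀ * A1 := symtrU hsymB hU₁i
    have hPQB : P * B + (Q - P * Yμ) * C = 1 := unimtrY hPQ
    have hPQ1 : (P * Ui₁) * A1 + ((Q - P * Yμ) * U₁ᵀ) * C1 = 1 := unimtrU hPQB hU₁i
    -- compute the (0,0) entry of A1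
    have hB0 : ∀ k, B k 0 = A k 0 + ∑ l, Yμ k l * C l 0 := by
      intro k; rw [hBdef, Matrix.add_apply, mul_apply]
    have hmu0 : mu 0 = mt 0 - T := by simp [hmudef]
    have hmus : ∀ i : Fin m, mu i.succ = mt i.succ := by
      intro i; simp [hmudef]
    have hB00 : B 0 0 = A 0 0 + ((mt 0 - T) * C 0 0 + ∑ i : Fin m, mt i.succ * C i.succ 0) := by
      rw [hB0, Fin.sum_univ_succ]
      have h1 : Yμ 0 0 * C 0 0 = (mt 0 - T) * C 0 0 := by
        rw [hYμapply, if_pos rfl, hmu0]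
      have h2 : ∑ i : Fin m, Yμ 0 i.succ * C i.succ 0
          = ∑ i : Fin m, mt i.succ * C i.succ 0 := by
        apply Finset.sum_congr rfl
        intro i _
        rw [hYμapply, if_pos rfl, hmus]
      rw [h1, h2]
    have hBs0 : ∀ i : Fin m, B i.succ 0 = A i.succ 0 + mt i.succ * C 0 0 := by
      intro i
      rw [hB0]
      congr 1
      have hterm : ∀ l, Yμ i.succ l * C l 0 = if l = 0 then mt i.succ * C l 0 else 0 := by
        intro l
        rw [hYμapply, if_neg (Fin.succ_ne_zero i)]
        by_cases hl : l = 0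
        · rw [if_pos hl, if_pos hl, hmus]
        · rw [if_neg hl, if_neg hl, zero_mul]
      rw [Finset.sum_congr rfl (fun l _ => hterm l), Finset.sum_ite_eq' Finset.univ 0]
      simp
    have hlamexts : ∀ i : Fin m, lamext i.succ = lam i := by
      intro i; simp [hlamextdef]
    have hA1apply0 : A1 0 0 = B 0 0 + ∑ i : Fin m, lam i * B i.succ 0 := by
      rw [hA1def, add_mul, one_mul, Matrix.add_apply, rowMat_mul, if_pos rfl, Fin.sum_univ_succ,
        hlamext0, zero_mul, zero_add]
      have h2 : ∑ i : Fin m, lamext i.succ * B i.succ 0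
          = ∑ i : Fin m, lam i * B i.succ 0 := by
        apply Finset.sum_congr rfl
        intro i _
        rw [hlamexts]
      rw [h2]
    have hyS : y * ((∑ i : Fin m, P 0 i.succ * A i.succ 0) + ∑ k, Q 0 k * C k 0)
        = (∑ i : Fin m, lam i * A i.succ 0)
          + (mt 0 * C 0 0 + ∑ i : Fin m, mt i.succ * C i.succ 0) := by
      rw [mul_add, Finset.mul_sum, Finset.mul_sum]
      have e1 : ∑ i : Fin m, y * (P 0 i.succ * A i.succ 0)
          = ∑ i : Fin m, lam i * A i.succ 0 := by
        apply Finset.sum_congr rfl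
        intro i _
        simp only [hlamdef]
        ring
      have e2 : ∑ k : Fin (m+1), y * (Q 0 k * C k 0)
          = mt 0 * C 0 0 + ∑ i : Fin m, mt i.succ * C i.succ 0 := by
        rw [Fin.sum_univ_succ]
        have e21 : y * (Q 0 0 * C 0 0) = mt 0 * C 0 0 := by
          simp only [hmtdef]; ring
        have e22 : ∑ i : Fin m, y * (Q 0 i.succ * C i.succ 0)
            = ∑ i : Fin m, mt i.succ * C i.succ 0 := by
          apply Finset.sum_congr rfl
          intro i _
          simp only [hmtdef]
          ring
        rw [e21, e22]
      rw [e1, e2]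
    have hA100 : A1 0 0 = A 0 0
        + y * ((∑ i : Fin m, P 0 i.succ * A i.succ 0) + ∑ k, Q 0 k * C k 0) := by
      rw [hA1apply0, hB00, hyS]
      have hsum : ∑ i : Fin m, lam i * B i.succ 0
          = (∑ i : Fin m, lam i * A i.succ 0) + T * C 0 0 := by
        have hterm : ∀ i : Fin m, lam i * B i.succ 0
            = lam i * A i.succ 0 + (lam i * mt i.succ) * C 0 0 := by
          intro i
          rw [hBs0]
          ring
        rw [Finset.sum_congr rfl (fun i _ => hterm i), Finset.sum_add_distrib,
          ← Finset.sum_mul, ← hTdef]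
      rw [hsum]
      ring
    have h1unit : IsUnit (A1 0 0) := by rw [hA100]; exact hy
    obtain ⟨u2, hu2⟩ := h1unit
    set v : R := (↑u2⁻¹ : R) with hvdef
    have hvu : v * A1 0 0 = 1 := by rw [← hu2]; exact u2.inv_mul
    have huv : A1 0 0 * v = 1 := by rw [← hu2]; exact u2.mul_inv
    -- phase 2 : clear the rest of the first column
    set cc : Fin (m+1) → R := Fin.cases 0 (fun i => -(A1 i.succ 0 * v)) with hccdef
    have hcc0 : cc 0 = 0 := by simp [hccdef]
    set U₂ : Matrix (Fin (m+1)) (Fin (m+1)) R := 1 + colMat 0 cc with hU₂def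
    set Ui₂ : Matrix (Fin (m+1)) (Fin (m+1)) R := 1 - colMat 0 cc with hUi₂def
    have hU₂i : U₂ * Ui₂ = 1 := unip_mul_unip _ (colMat_nil 0 cc hcc0)
    apply combU A1 C1 U₂ Ui₂ hU₂i
    set A2 : Matrix (Fin (m+1)) (Fin (m+1)) R := U₂ * A1 with hA2def
    set C2 : Matrix (Fin (m+1)) (Fin (m+1)) R := Ui₂ᵀ * C1 with hC2def
    have hsym2 : A2ᵀ * C2 = C2ᵀ * A2 := symtrU hsym1 hU₂i
    have hPQ2 : ((P * Ui₁) * Ui₂) * A2 + ((((Q - P * Yμ) * U₁ᵀ)) * U₂ᵀ) * C2 = 1 :=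
      unimtrU hPQ1 hU₂i
    have hA2apply : ∀ k l, A2 k l = A1 k l + cc k * A1 0 l := by
      intro k l
      rw [hA2def, hU₂def, add_mul, one_mul, Matrix.add_apply, colMat_mul]
    have hA200 : A2 0 0 = A1 0 0 := by rw [hA2apply, hcc0, zero_mul, add_zero]
    have hA2s0 : ∀ i : Fin m, A2 i.succ 0 = 0 := by
      intro i
      rw [hA2apply]
      simp only [hccdef, Fin.cases_succ]
      have h1 : -(A1 i.succ 0 * v) * A1 0 0 = -(A1 i.succ 0 * (v * A1 0 0)) := by ring
      rw [h1, hvu, mul_one, add_neg_cancel]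
    -- phase 3 : rescale the pivot
    set dv : Fin (m+1) → R := Fin.cases v (fun _ => 1) with hdvdef
    set du : Fin (m+1) → R := Fin.cases (↑u2 : R) (fun _ => 1) with hdudef
    set U₃ : Matrix (Fin (m+1)) (Fin (m+1)) R := diagonal dv with hU₃def
    set Ui₃ : Matrix (Fin (m+1)) (Fin (m+1)) R := diagonal du with hUi₃def
    have hU₃i : U₃ * Ui₃ = 1 := by
      rw [hU₃def, hUi₃def, diagonal_mul_diagonal]
      have hfun : (fun i => dv i * du i) = fun _ : Fin (m+1) => (1 : R) := by
        funext k
        induction k using Fin.cases with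
        | zero =>
          simp only [hdvdef, hdudef, Fin.cases_zero]
          exact u2.inv_mul
        | succ i => simp [hdvdef, hdudef]
      rw [hfun, diagonal_one]
    apply combU A2 C2 U₃ Ui₃ hU₃i
    set A3 : Matrix (Fin (m+1)) (Fin (m+1)) R := U₃ * A2 with hA3def
    set C3 : Matrix (Fin (m+1)) (Fin (m+1)) R := Ui₃ᵀ * C2 with hC3def
    have hsym3 : A3ᵀ * C3 = C3ᵀ * A3 := symtrU hsym2 hU₃i
    have hPQ3 : (((P * Ui₁) * Ui₂) * Ui₃) * A3
        + (((((Q - P * Yμ) * U₁ᵀ)) * U₂ᵀ) * U₃ᵀ) * C3 = 1 := unimtrU hPQ2 hU₃i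
    have hA3apply : ∀ k l, A3 k l = dv k * A2 k l := by
      intro k l
      rw [hA3def, hU₃def, diagonal_mul]
    have h300 : A3 0 0 = 1 := by
      rw [hA3apply, hA200]
      simp only [hdvdef, Fin.cases_zero]
      exact hvu
    have h3s0 : ∀ i : Fin m, A3 i.succ 0 = 0 := by
      intro i
      rw [hA3apply, hA2s0, mul_zero]
    exact finalStage ih A3 C3 _ _ hsym3 hPQ3 h300 h3s0

end LemA3

section Main
variable {R : Type*} [NormedCommRing R] [NormedAlgebra ℂ R] {n : ℕ}
set_option linter.unusedSectionVars false

lemma JJ : Jmat R n * Jmat R n = -1 := by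
  unfold Jmat
  simp [fromBlocks_multiply]
  rw [← fromBlocks_one, fromBlocks_neg]
  simp

lemma symp_flip {N : Matrix (Idx n) (Idx n) R} (hN : IsSymplectic N) :
    N * Jmat R n * Nᵀ = Jmat R n := by
  have hJJ : Jmat R n * Jmat R n = -1 := JJ
  have hnJJ : (-Jmat R n) * Jmat R n = 1 := by rw [neg_mul, hJJ, neg_neg]
  have hJnJ : Jmat R n * (-Jmat R n) = 1 := by rw [mul_neg, hJJ, neg_neg]
  have hL : ((-Jmat R n) * Nᵀ * Jmat R n) * N = 1 := by
    have h1 : ((-Jmat R n) * Nᵀ * Jmat R n) * N = (-Jmat R n) * (Nᵀ * Jmat R n * N) := by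
      simp only [mul_assoc]
    rw [h1, hN, hnJJ]
  have hR : N * ((-Jmat R n) * Nᵀ * Jmat R n) = 1 := mul_eq_one_comm.mp hL
  have h3 : (N * (-Jmat R n) * Nᵀ) * Jmat R n = 1 := by
    rw [← hR]; simp only [mul_assoc]
  have h4 : N * (-Jmat R n) * Nᵀ = -Jmat R n := by
    have h5 := congrArg (fun Z => Z * (-Jmat R n)) h3
    simp only [one_mul] at h5
    rwa [mul_assoc, hJnJ, mul_one] at h5
  have h6 : N * Jmat R n * Nᵀ = -(N * (-Jmat R n) * Nᵀ) := by
    simp [mul_neg, neg_mul]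
  rw [h6, h4, neg_neg]

lemma symp_blocks {A B C D : Matrix (Fin n) (Fin n) R}
    (hM : IsSymplectic (fromBlocks A B C D)) :
    Aᵀ * C = Cᵀ * A ∧ Dᵀ * A - Bᵀ * C = 1 ∧ Aᵀ * D - Cᵀ * B = 1 := by
  unfold IsSymplectic Jmat at hM
  rw [fromBlocks_transpose] at hM
  simp only [fromBlocks_multiply, Matrix.mul_zero, Matrix.zero_mul, Matrix.mul_one,
    Matrix.one_mul, Matrix.mul_neg, Matrix.neg_mul, add_zero, zero_add] at hM
  rw [fromBlocks_inj] at hM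
  obtain ⟨h11, h12, h21, h22⟩ := hM
  refine ⟨?_, ?_, ?_⟩
  · -- from h11 : -(Cᵀ * A) + Aᵀ * C = 0 (or a similar arrangement)
    have := h11
    linear_combination (norm := noncomm_ring) this
  · have := h21
    linear_combination (norm := noncomm_ring) -this
  · have := h12
    linear_combination (norm := noncomm_ring) this

lemma symp_blocks' {A B C D : Matrix (Fin n) (Fin n) R}
    (hM : IsSymplectic (fromBlocks A B C D)) :
    A * Bᵀ = B * Aᵀ := by
  have hflip := symp_flip hM
  unfold Jmat at hflip
  rw [fromBlocks_transpose] at hflip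
  simp only [fromBlocks_multiply, Matrix.mul_zero, Matrix.zero_mul, Matrix.mul_one,
    Matrix.one_mul, Matrix.mul_neg, Matrix.neg_mul, add_zero, zero_add] at hflip
  rw [fromBlocks_inj] at hflip
  obtain ⟨h11, _, _, _⟩ := hflip
  linear_combination (norm := noncomm_ring) h11

end Main

section Main2
variable {R : Type*} [NormedCommRing R] [NormedAlgebra ℂ R] {n : ℕ}
set_option linter.unusedSectionVars false

lemma GLD_of_isUnit
    (hbsr : ∀ x₁ x₂ : R, (∃ r s : R, r * x₁ + s * x₂ = 1) → ∃ y : R, IsUnit (x₁ + y * x₂))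
    {A : Matrix (Fin n) (Fin n) R} (hA : IsUnit A) : GLD A :=
  (gendec hbsr A hA).gld

theorem SpNull_of_symplectic
    (hbsr : ∀ x₁ x₂ : R, (∃ r s : R, r * x₁ + s * x₂ = 1) → ∃ y : R, IsUnit (x₁ + y * x₂))
    (M : Matrix (Idx n) (Idx n) R) (hM : IsSymplectic M) : SpNull M := by
  classical
  obtain ⟨A, B, C, D, rfl⟩ : ∃ A B C D, M = fromBlocks A B C D :=
    ⟨M.toBlocks₁₁, M.toBlocks₁₂, M.toBlocks₂₁, M.toBlocks₂₂, (fromBlocks_toBlocks M).symm⟩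
  obtain ⟨hsym, h21, _⟩ := symp_blocks hM
  have hunimod : ∃ P Q : Matrix (Fin n) (Fin n) R, P * A + Q * C = 1 :=
    ⟨Dᵀ, -Bᵀ, by rw [neg_mul, ← sub_eq_add_neg]; exact h21⟩
  obtain ⟨Y, hYs, hYu⟩ := lemA hbsr A C hsym hunimod
  -- multiply by the E-type matrix with block Y
  set G1 : Matrix (Idx n) (Idx n) R := fromBlocks 1 Y 0 1 with hG1def
  have hG1symp : IsSymplectic G1 := symp_E hYs
  set A' := A + Y * C with hA'def
  set B' := B + Y * D with hB'def
  have hN : G1 * fromBlocks A B C D = fromBlocks A' B' C D := by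
    rw [hG1def]
    simp [fromBlocks_multiply, hA'def, hB'def]
  have hNsymp : IsSymplectic (fromBlocks A' B' C D) := by
    rw [← hN]; exact hG1symp.mul hM
  obtain ⟨hsymN, _, h12N⟩ := symp_blocks hNsymp
  have hABt : A' * B'ᵀ = B' * A'ᵀ := symp_blocks' hNsymp
  -- the invertible corner
  have hA'u : IsUnit A' := hYu
  obtain ⟨V, hV, hSpD⟩ := GLD_of_isUnit hbsr hA'u
  have hVt : Vᵀ * A' = 1 := by
    have := congrArg transpose hV
    rwa [transpose_mul, transpose_transpose, transpose_one] at this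
  have hAVt : A' * Vᵀ = 1 := mul_eq_one_comm.mp hVt
  have hVAt : V * A'ᵀ = 1 := mul_eq_one_comm.mp hV
  set S := C * Vᵀ with hSdef
  set T := Vᵀ * B' with hTdef
  have hSsym : Sᵀ = S := by
    have hCt : A'ᵀ * C * Vᵀ = Cᵀ := by
      rw [hsymN, mul_assoc, hAVt, mul_one]
    rw [hSdef, transpose_mul, transpose_transpose, ← hCt]
    calc V * (A'ᵀ * C * Vᵀ) = (V * A'ᵀ) * (C * Vᵀ) := by simp only [mul_assoc]
      _ = C * Vᵀ := by rw [hVAt, one_mul]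
  have hTsym : Tᵀ = T := by
    rw [hTdef, transpose_mul, transpose_transpose]
    have e1 : Vᵀ * (A' * B'ᵀ) * V = B'ᵀ * V := by
      rw [← mul_assoc, hVt, one_mul]
    have e2 : Vᵀ * (B' * A'ᵀ) * V = Vᵀ * B' := by
      rw [mul_assoc, mul_assoc]
      rw [show A'ᵀ * V = 1 from hV, mul_one]
    rw [← e1, hABt, e2]
  have hSA : S * A' = C := by
    rw [hSdef, mul_assoc, hVt, mul_one]
  have hAT : A' * T = B' := by
    rw [hTdef, ← mul_assoc, hAVt, one_mul]
  have hSAT : S * A' * T + V = D := by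
    have key : A'ᵀ * (S * A' * T + V) = A'ᵀ * D := by
      rw [hSA, hTdef, mul_add, hV]
      have e3 : A'ᵀ * (C * (Vᵀ * B')) = Cᵀ * B' := by
        calc A'ᵀ * (C * (Vᵀ * B')) = (A'ᵀ * C * Vᵀ) * B' := by simp only [mul_assoc]
          _ = (Cᵀ * A' * Vᵀ) * B' := by rw [hsymN]
          _ = Cᵀ * (A' * Vᵀ) * B' := by simp only [mul_assoc]
          _ = Cᵀ * B' := by rw [hAVt, mul_one]
      rw [e3]
      linear_combination (norm := noncomm_ring) -h12N
    calc S * A' * T + V = (V * A'ᵀ) * (S * A' * T + V) := by rw [hVAt, one_mul]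
      _ = (V * A'ᵀ) * D := by rw [mul_assoc, key, ← mul_assoc]
      _ = D := by rw [hVAt, one_mul]
  have hfact : fromBlocks A' B' C D =
      fromBlocks 1 0 S 1 * fromBlocks A' 0 0 V * fromBlocks 1 T 0 1 := by
    simp only [fromBlocks_multiply, Matrix.mul_zero, Matrix.zero_mul, Matrix.mul_one,
      Matrix.one_mul, add_zero, zero_add]
    rw [fromBlocks_inj]
    exact ⟨rfl, (hAT).symm, (hSA).symm, (hSAT).symm⟩
  have hNnull : SpNull (fromBlocks A' B' C D) := by
    rw [hfact]
    exact ((SpNull_F hSsym).mul hSpD).mul (SpNull_E hTsym)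
  -- undo the first move
  have hG1inv : (fromBlocks 1 (-Y) 0 1 : Matrix (Idx n) (Idx n) R) * G1 = 1 := by
    rw [hG1def]
    simp [fromBlocks_multiply, fromBlocks_one]
  have hMeq : fromBlocks A B C D = fromBlocks 1 (-Y) 0 1 * fromBlocks A' B' C D := by
    rw [← hN, ← mul_assoc, hG1inv, one_mul]
  rw [hMeq]
  have hYnegs : (-Y)ᵀ = -Y := by rw [transpose_neg, hYs]
  exact (SpNull_E hYnegs).mul hNnull

end Main2

/-- If `R` is a commutative Banach algebra of Bass stable rank one, every symplectic matrix
over `R` is connected to the identity by a continuous path inside `Sp_{2n}(R)`. -/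
theorem stmt19 {R : Type*} [NormedCommRing R] [NormedAlgebra ℂ R] [CompleteSpace R] {n : ℕ}
    (hbsr : ∀ x₁ x₂ : R, (∃ r s : R, r * x₁ + s * x₂ = 1) → ∃ y : R, IsUnit (x₁ + y * x₂))
    (M : Matrix (Idx n) (Idx n) R) (hM : IsSymplectic M) :
    ∃ γ : ℝ → Matrix (Idx n) (Idx n) R,
      ContinuousOn γ (Set.Icc 0 1) ∧
      (∀ t ∈ Set.Icc (0 : ℝ) 1, IsSymplectic (γ t)) ∧
      γ 0 = 1 ∧ γ 1 = M := by
  obtain ⟨γ, hc, hs, h0, h1⟩ := SpNull_of_symplectic hbsr M hM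
  exact ⟨γ, hc.continuousOn, fun t _ => hs t, h0, h1⟩
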